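/- Let C be a Griesmer [g_q(k,d),k,d] code over F_q with k ≥ 2 and let a be a codeword of minimum weight d. Then the residual code Res(C,a) is a Griesmer [g_q(k−1,⌈d/q⌉), k−1, ⌈d/q⌉] code. -/

import Mathlib

/-- Hamming weight of a vector. -/
noncomputable def wt {ι F : Type*} [Zero F] (c : ι → F) : ℕ :=
  Nat.card {i // c i ≠ 0}

/-- Griesmer sum `g_q(k,d) = ∑_{i<k} ⌈d / q^i⌉` (using `(d + q^i - 1)/q^i`). -/
def gbound (q k d : ℕ) : ℕ :=
  ∑ i ∈ Finset.range k, (d + q ^ i - 1) / q ^ i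

open Finset

/- ### basic weight lemmas -/

lemma wt_filter {ι F : Type*} [Fintype ι] [Zero F] [DecidableEq F] (c : ι → F) :
    wt c = (univ.filter fun i => c i ≠ 0).card := by
  unfold wt
  rw [Nat.card_eq_fintype_card, Fintype.card_subtype]

lemma wt_eq_zero_iff {ι F : Type*} [Fintype ι] [Zero F] (c : ι → F) :
    wt c = 0 ↔ c = 0 := by
  classical
  rw [wt_filter, Finset.card_eq_zero, Finset.filter_eq_empty_iff]
  constructor
  · intro h; funext i; by_contra hc; exact h (mem_univ i) hc
  · intro h i _ hc; exact hc (congrFun h i)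

lemma wt_le_card {ι F : Type*} [Fintype ι] [Zero F] (c : ι → F) :
    wt c ≤ Fintype.card ι := by
  classical
  rw [wt_filter]; exact (Finset.card_filter_le _ _).trans (by simp)

/- ### arithmetic lemmas on ceiling division and `gbound` -/

lemma cdiv_eq {m d : ℕ} (hm : 0 < m) (hd : 0 < d) :
    (d + m - 1) / m = (d - 1) / m + 1 := by
  have h : d + m - 1 = (d - 1) + m := by omega
  rw [h, Nat.add_div_right _ hm]

lemma cdiv_comp {A B d : ℕ} (hA : 0 < A) (hB : 0 < B) :
    (d + A * B - 1) / (A * B) = ((d + A - 1) / A + B - 1) / B := by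
  have hAB : 0 < A * B := Nat.mul_pos hA hB
  rcases Nat.eq_zero_or_pos d with rfl | hd
  · have e1 : (0 + A * B - 1) / (A * B) = 0 := Nat.div_eq_of_lt (by omega)
    have e2 : (0 + A - 1) / A = 0 := Nat.div_eq_of_lt (by omega)
    rw [e1, e2]
    exact (Nat.div_eq_of_lt (by omega)).symm
  · rw [cdiv_eq hAB hd, cdiv_eq hA hd]
    have h1 : (d - 1) / A + 1 + B - 1 = (d - 1) / A + B := by
      generalize (d - 1) / A = x; omega
    rw [h1, Nat.add_div_right _ hB, Nat.div_div_eq_div_mul]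

lemma gbound_succ {q k d : ℕ} (hq : 0 < q) :
    gbound q (k + 1) d = d + gbound q k ((d + q - 1) / q) := by
  unfold gbound
  rw [Finset.sum_range_succ']
  simp only [pow_zero, Nat.add_sub_cancel, Nat.div_one]
  rw [Nat.add_comm]
  congr 1
  refine Finset.sum_congr rfl fun i _ => ?_
  rw [pow_succ']
  exact cdiv_comp hq (Nat.pow_pos (n := i) hq)

lemma gbound_mono {q k d e : ℕ} (h : d ≤ e) : gbound q k d ≤ gbound q k e := by
  refine Finset.sum_le_sum fun i _ => Nat.div_le_div_right (by omega)

lemma gbound_lt {q k d : ℕ} (hq : 0 < q) (hk : 1 ≤ k) :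
    gbound q k d < gbound q k (d + 1) := by
  obtain ⟨k, rfl⟩ := Nat.exists_eq_add_of_le hk
  rw [Nat.add_comm 1 k, gbound_succ hq, gbound_succ hq]
  have : gbound q k ((d + q - 1) / q) ≤ gbound q k ((d + 1 + q - 1) / q) :=
    gbound_mono (Nat.div_le_div_right (by omega))
  omega

/- ### counting lemmas -/

lemma card_filter_sum {ι : Type*} [Fintype ι] (p : ι → Prop) [DecidablePred p] :
    (univ.filter p).card = ∑ i, if p i then 1 else 0 := by
  rw [Finset.sum_ite, Finset.sum_const_zero, add_zero, Finset.sum_const, smul_eq_mul, mul_one]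

section counts
variable {ι F : Type*} [Fintype ι] [Field F] [DecidableEq F]

lemma wt_sub_smul (a c : ι → F) (l : F) :
    wt (c - l • a) = (univ.filter fun i => a i = 0 ∧ c i ≠ 0).card
      + (univ.filter fun i => a i ≠ 0 ∧ c i ≠ l * a i).card := by
  rw [wt_filter, card_filter_sum, card_filter_sum, card_filter_sum, ← Finset.sum_add_distrib]
  refine Finset.sum_congr rfl fun i _ => ?_
  by_cases ha : a i = 0 <;> simp [ha, sub_ne_zero]

lemma T_add_N (a c : ι → F) (l : F) :
    (univ.filter fun i => a i ≠ 0 ∧ c i ≠ l * a i).card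
      + (univ.filter fun i => a i ≠ 0 ∧ c i = l * a i).card
      = (univ.filter fun i => a i ≠ 0).card := by
  rw [card_filter_sum, card_filter_sum, card_filter_sum, ← Finset.sum_add_distrib]
  refine Finset.sum_congr rfl fun i _ => ?_
  by_cases ha : a i = 0 <;> by_cases hc : c i = l * a i <;> simp [ha, hc]

lemma sum_N [Fintype F] (a c : ι → F) :
    ∑ l : F, (univ.filter fun i => a i ≠ 0 ∧ c i = l * a i).card
      = (univ.filter fun i => a i ≠ 0).card := by
  simp only [card_filter_sum]
  rw [Finset.sum_comm]
  refine Finset.sum_congr rfl fun i _ => ?_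
  by_cases ha : a i = 0
  · simp [ha]
  · have hiff : ∀ l : F, (a i ≠ 0 ∧ c i = l * a i) ↔ l = c i * (a i)⁻¹ := by
      intro l
      constructor
      · rintro ⟨-, h⟩; field_simp [h]; exact h.symm
      · rintro rfl; refine ⟨ha, by field_simp⟩
    simp only [hiff]
    simp [Finset.sum_ite_eq', ha]

lemma card_zeros (a : ι → F) :
    Nat.card {i // a i = 0} = Fintype.card ι - wt a := by
  rw [Nat.card_eq_fintype_card, Fintype.card_subtype, wt_filter]
  have h := Finset.card_filter_add_card_filter_not
    (s := (univ : Finset ι)) (p := fun i => a i = 0)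
  simp only [ne_eq, card_univ] at h ⊢
  omega

/-- weight of the restriction of `c` to the zero set of `a`. -/
lemma wt_restrict (a c : ι → F) :
    wt (LinearMap.funLeft F F (Subtype.val : {i // a i = 0} → ι) c)
      = (univ.filter fun i => a i = 0 ∧ c i ≠ 0).card := by
  unfold wt
  have h := Nat.card_congr
    ((Equiv.subtypeEquivRight (fun i' : {i // a i = 0} =>
        (Iff.rfl : (LinearMap.funLeft F F (Subtype.val : {i // a i = 0} → ι) c i' ≠ 0)
          ↔ c i'.1 ≠ 0))).trans
      (Equiv.subtypeSubtypeEquivSubtypeInter (fun i => a i = 0) (fun i => c i ≠ 0)))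
  rw [h, Nat.card_eq_fintype_card, Fintype.card_subtype]

end counts

section res
variable {ι F : Type*} [Fintype ι] [Field F] [Fintype F] [DecidableEq F]

/-- minimum weight of the residual code, by the averaging argument. -/
lemma residual_min (C : Submodule F (ι → F)) (e : ℕ)
    (hmin : ∀ c ∈ C, c ≠ 0 → e ≤ wt c)
    (a : ι → F) (haC : a ∈ C) (haw : wt a = e)
    {c' : {i // a i = 0} → F}
    (hc' : c' ∈ C.map (LinearMap.funLeft F F (Subtype.val : {i // a i = 0} → ι)))
    (hne : c' ≠ 0) :
    (e + Fintype.card F - 1) / Fintype.card F ≤ wt c' := by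
  obtain ⟨c, hc, rfl⟩ := hc'
  set q := Fintype.card F with hqdef
  have hq : 0 < q := Fintype.card_pos
  set Z := (univ.filter fun i => a i = 0 ∧ c i ≠ 0).card with hZ
  have hfa : LinearMap.funLeft F F (Subtype.val : {i // a i = 0} → ι) a = 0 := by
    funext i'
    exact i'.2
  have hne' : ∀ l : F, c - l • a ≠ 0 := by
    intro l h
    apply hne
    have hcl : c = l • a := by rwa [sub_eq_zero] at h
    rw [hcl, map_smul, hfa, smul_zero]
  have hlow : ∀ l : F, e ≤ wt (c - l • a) := fun l =>
    hmin _ (sub_mem hc (Submodule.smul_mem _ _ haC)) (hne' l)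
  have hA : (univ.filter fun i => a i ≠ 0).card = e := by
    rw [← wt_filter]; exact haw
  have hsum1 : ∑ l : F, wt (c - l • a)
      = q * Z + ∑ l : F, (univ.filter fun i => a i ≠ 0 ∧ c i ≠ l * a i).card := by
    simp only [wt_sub_smul]
    rw [Finset.sum_add_distrib, Finset.sum_const, card_univ, smul_eq_mul]
  have hsum2 : q * e ≤ ∑ l : F, wt (c - l • a) := by
    calc q * e = ∑ _l : F, e := by rw [Finset.sum_const, card_univ, smul_eq_mul]
    _ ≤ _ := Finset.sum_le_sum fun l _ => hlow l
  have hsum3 : (∑ l : F, (univ.filter fun i => a i ≠ 0 ∧ c i ≠ l * a i).card) + e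
      = q * e := by
    have h1 : ∑ l : F, ((univ.filter fun i => a i ≠ 0 ∧ c i ≠ l * a i).card
        + (univ.filter fun i => a i ≠ 0 ∧ c i = l * a i).card) = q * e := by
      simp only [T_add_N, hA]
      rw [Finset.sum_const, card_univ, smul_eq_mul]
    rw [Finset.sum_add_distrib, sum_N, hA] at h1
    exact h1
  have key : e ≤ q * Z := by
    rw [hsum1] at hsum2
    generalize hu : q * e = u at hsum2 hsum3
    generalize hv : q * Z = v at hsum2 ⊢
    omega
  have hwt : wt (LinearMap.funLeft F F (Subtype.val : {i // a i = 0} → ι) c) = Z :=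
    wt_restrict a c
  rw [hwt, Nat.div_le_iff_le_mul_add_pred hq]
  generalize hv : q * Z = v at key ⊢
  omega

/-- kernel of restriction: codewords supported inside `supp a` are multiples of `a`. -/
lemma residual_ker (C : Submodule F (ι → F)) (e : ℕ)
    (hmin : ∀ c ∈ C, c ≠ 0 → e ≤ wt c)
    (a : ι → F) (haC : a ∈ C) (haw : wt a = e) (he : 0 < e)
    {c : ι → F} (hc : c ∈ C) (hz : ∀ i, a i = 0 → c i = 0) :
    ∃ l : F, c = l • a := by
  have ha0 : a ≠ 0 := by
    intro h
    rw [h, (wt_eq_zero_iff (0 : ι → F)).2 rfl] at haw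
    omega
  obtain ⟨i0, hi0⟩ : ∃ i, a i ≠ 0 := by
    by_contra h
    push_neg at h
    exact ha0 (funext h)
  refine ⟨c i0 * (a i0)⁻¹, ?_⟩
  by_contra hne
  set b := c - (c i0 * (a i0)⁻¹) • a with hb
  have hbC : b ∈ C := sub_mem hc (Submodule.smul_mem _ _ haC)
  have hb0 : b ≠ 0 := sub_ne_zero.2 hne
  have hble : (univ.filter fun i => b i ≠ 0) ⊆ (univ.filter fun i => a i ≠ 0) := by
    intro i hi
    simp only [mem_filter, mem_univ, true_and] at hi ⊢
    intro hai
    apply hi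
    simp [hb, hz i hai, hai]
  have h1 : e ≤ wt b := hmin b hbC hb0
  have h2 : (univ.filter fun i => a i ≠ 0).card = e := by rw [← wt_filter]; exact haw
  have h3 : wt b ≤ e := by
    rw [wt_filter]
    exact h2 ▸ Finset.card_le_card hble
  have heq : (univ.filter fun i => b i ≠ 0) = (univ.filter fun i => a i ≠ 0) := by
    refine Finset.eq_of_subset_of_card_le hble ?_
    rw [h2]
    rw [wt_filter] at h1
    exact le_trans h1 (le_refl _)
  have hmem : i0 ∈ (univ.filter fun i => b i ≠ 0) := by
    rw [heq]; simp [hi0]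
  have hbi0 : b i0 ≠ 0 := by simpa using hmem
  apply hbi0
  have : b i0 = c i0 - c i0 * (a i0)⁻¹ * a i0 := by simp [hb]
  rw [this]
  field_simp
  simp

/-- the residual code has dimension one less. -/
lemma residual_finrank (C : Submodule F (ι → F)) (e : ℕ)
    (hmin : ∀ c ∈ C, c ≠ 0 → e ≤ wt c)
    (a : ι → F) (haC : a ∈ C) (haw : wt a = e) (he : 0 < e) :
    Module.finrank F
      (C.map (LinearMap.funLeft F F (Subtype.val : {i // a i = 0} → ι))) + 1
      = Module.finrank F C := by
  set f := LinearMap.funLeft F F (Subtype.val : {i // a i = 0} → ι) with hf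
  have ha0 : a ≠ 0 := by
    intro h
    rw [h, (wt_eq_zero_iff (0 : ι → F)).2 rfl] at haw
    omega
  have hrank := LinearMap.finrank_range_add_finrank_ker (f ∘ₗ C.subtype)
  have hrange : LinearMap.range (f ∘ₗ C.subtype) = C.map f := by
    rw [LinearMap.range_comp, Submodule.range_subtype]
  have hker : LinearMap.ker (f ∘ₗ C.subtype) = Submodule.span F {(⟨a, haC⟩ : C)} := by
    apply le_antisymm
    · intro x hx
      have hx0 : f (x : ι → F) = 0 := hx
      have hz : ∀ i, a i = 0 → (x : ι → F) i = 0 := by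
        intro i hi
        exact congrFun hx0 ⟨i, hi⟩
      obtain ⟨l, hl⟩ := residual_ker C e hmin a haC haw he x.2 hz
      rw [Submodule.mem_span_singleton]
      exact ⟨l, Subtype.ext hl.symm⟩
    · rw [Submodule.span_le, Set.singleton_subset_iff]
      show (⟨a, haC⟩ : C) ∈ LinearMap.ker (f ∘ₗ C.subtype)
      rw [LinearMap.mem_ker]
      show f a = 0
      funext i'
      exact i'.2
  have hspan : Module.finrank F (Submodule.span F {(⟨a, haC⟩ : C)}) = 1 := by
    refine finrank_span_singleton ?_
    intro h
    exact ha0 (congrArg Subtype.val h)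
  rw [hrange, hker, hspan] at hrank
  exact hrank

/-- existence of a minimum-weight codeword. -/
lemma exists_min (C : Submodule F (ι → F)) (hC : C ≠ ⊥) :
    ∃ e a, a ∈ C ∧ a ≠ 0 ∧ wt a = e ∧ (∀ c ∈ C, c ≠ 0 → e ≤ wt c) := by
  obtain ⟨b, hbC, hb0⟩ := Submodule.exists_mem_ne_zero_of_ne_bot hC
  set S : Set ℕ := {m | ∃ c ∈ C, c ≠ 0 ∧ wt c = m} with hS
  have hSne : S.Nonempty := ⟨wt b, b, hbC, hb0, rfl⟩
  obtain ⟨a, haC, ha0, haw⟩ := Nat.sInf_mem hSne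
  exact ⟨sInf S, a, haC, ha0, haw, fun c hc hc0 => Nat.sInf_le ⟨c, hc, hc0, rfl⟩⟩

end res

/-- The Griesmer bound. -/
lemma griesmer {F : Type*} [Field F] [Fintype F] [DecidableEq F] :
    ∀ (k : ℕ) (ι : Type) [Fintype ι] (C : Submodule F (ι → F)) (d : ℕ),
      k ≤ Module.finrank F C → (∀ c ∈ C, c ≠ 0 → d ≤ wt c) →
      gbound (Fintype.card F) k d ≤ Fintype.card ι := by
  intro k
  induction k with
  | zero => intro ι _ C d _ _; simp [gbound]
  | succ k ih =>
    intro ι _ C d hkr hmin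
    have hq : 0 < Fintype.card F := Fintype.card_pos
    have hC : C ≠ ⊥ := by
      intro h
      rw [h, finrank_bot] at hkr
      omega
    obtain ⟨e, a, haC, ha0, haw, hmin'⟩ := exists_min C hC
    have hde : d ≤ e := haw ▸ hmin a haC ha0
    have he : 0 < e := by
      rcases Nat.eq_zero_or_pos e with h | h
      · exact absurd ((wt_eq_zero_iff a).1 (haw.trans h)) ha0
      · exact h
    have hrk := residual_finrank C e hmin' a haC haw he
    have hcard : Fintype.card {i // a i = 0} = Fintype.card ι - e := by
      have := card_zeros a
      rw [Nat.card_eq_fintype_card] at this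
      rw [this, haw]
    have hres := ih {i // a i = 0}
      (C.map (LinearMap.funLeft F F (Subtype.val : {i // a i = 0} → ι)))
      ((e + Fintype.card F - 1) / Fintype.card F)
      (by omega)
      (fun c' hc' hc0 => residual_min C e hmin' a haC haw hc' hc0)
    rw [hcard] at hres
    have hle : e ≤ Fintype.card ι := haw ▸ wt_le_card a
    calc gbound (Fintype.card F) (k + 1) d ≤ gbound (Fintype.card F) (k + 1) e :=
          gbound_mono hde
      _ = e + gbound (Fintype.card F) k ((e + Fintype.card F - 1) / Fintype.card F) :=
          gbound_succ hq
      _ ≤ e + (Fintype.card ι - e) := by omega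
      _ ≤ Fintype.card ι := by omega

theorem stmt5 {F : Type*} [Field F] [Fintype F] {n k d : ℕ}
    (C : Submodule F (Fin n → F))
    (hk : Module.finrank F C = k) (hk2 : 2 ≤ k)
    (hn : n = gbound (Fintype.card F) k d)
    (hmin : ∀ c ∈ C, c ≠ 0 → d ≤ wt c)
    (hex : ∃ c ∈ C, c ≠ 0 ∧ wt c = d)
    (a : Fin n → F) (haC : a ∈ C) (haw : wt a = d) :
    Nat.card {i : Fin n // a i = 0} =
        gbound (Fintype.card F) (k - 1) ((d + Fintype.card F - 1) / Fintype.card F) ∧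
    Module.finrank F
      (C.map (LinearMap.funLeft F F (Subtype.val : {i : Fin n // a i = 0} → Fin n))) = k - 1 ∧
    (∀ c' ∈ C.map (LinearMap.funLeft F F (Subtype.val : {i : Fin n // a i = 0} → Fin n)),
      c' ≠ 0 → (d + Fintype.card F - 1) / Fintype.card F ≤ wt c') ∧
    (∃ c' ∈ C.map (LinearMap.funLeft F F (Subtype.val : {i : Fin n // a i = 0} → Fin n)),
      c' ≠ 0 ∧ wt c' = (d + Fintype.card F - 1) / Fintype.card F) := by
  classical
  set q := Fintype.card F with hqdef
  have hq : 0 < q := Fintype.card_pos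
  set d' := (d + q - 1) / q with hd'
  -- d is positive
  have hd : 0 < d := by
    obtain ⟨c, hc, hc0, hcw⟩ := hex
    rcases Nat.eq_zero_or_pos d with h | h
    · exact absurd ((wt_eq_zero_iff c).1 (hcw.trans h)) hc0
    · exact h
  -- part 1 : length of the residual code
  have hcard : Nat.card {i : Fin n // a i = 0} = gbound q (k - 1) d' := by
    have h1 := card_zeros a
    rw [haw] at h1
    have h2 : n = d + gbound q (k - 1) d' := by
      have := gbound_succ (q := q) (k := k - 1) (d := d) hq
      rw [show k - 1 + 1 = k by omega] at this
      rw [hn, this]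
    have h3 : Fintype.card (Fin n) = n := Fintype.card_fin n
    rw [h1, h3, h2]
    omega
  -- part 2 : dimension of the residual code
  have hrk := residual_finrank C d hmin a haC haw hd
  have hdim : Module.finrank F
      (C.map (LinearMap.funLeft F F (Subtype.val : {i : Fin n // a i = 0} → Fin n))) = k - 1 := by
    rw [hk] at hrk
    omega
  -- part 3 : minimum distance of the residual code
  have hminres : ∀ c' ∈ C.map
      (LinearMap.funLeft F F (Subtype.val : {i : Fin n // a i = 0} → Fin n)),
      c' ≠ 0 → d' ≤ wt c' := fun c' hc' hc0 => residual_min C d hmin a haC haw hc' hc0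
  refine ⟨hcard, hdim, hminres, ?_⟩
  -- part 4 : existence of a codeword of weight exactly d'
  set R := C.map (LinearMap.funLeft F F (Subtype.val : {i : Fin n // a i = 0} → Fin n)) with hR
  have hRne : R ≠ ⊥ := by
    intro h
    rw [h, finrank_bot] at hdim
    omega
  obtain ⟨e, b, hbR, hb0, hbw, hminR⟩ := exists_min R hRne
  have hed : d' ≤ e := hbw ▸ hminres b hbR hb0
  -- if e > d', the Griesmer bound is violated
  have hgb := griesmer (k - 1) {i : Fin n // a i = 0} R e (le_of_eq hdim.symm) hminR
  have hcard2 : Fintype.card {i : Fin n // a i = 0} = gbound q (k - 1) d' := by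
    rw [← Nat.card_eq_fintype_card]
    exact hcard
  rw [hcard2] at hgb
  rw [← hqdef] at hgb
  have hee : e = d' := by
    by_contra hne
    have h1 : d' + 1 ≤ e := by omega
    have h2 : gbound q (k - 1) (d' + 1) ≤ gbound q (k - 1) e := gbound_mono h1
    have h3 : gbound q (k - 1) d' < gbound q (k - 1) (d' + 1) :=
      gbound_lt hq (by omega)
    omega
  exact ⟨b, hbR, hb0, hbw.trans (by rw [hee])⟩
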